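/- Under the Lipschitz assumptions on f, π, σ and the well-calibrated event, the Wasserstein-1 distance between the hallucinated mean-field flow μ̃_{t,h} (under f̃_{t-1}) and the true flow μ_{t,h} (under f), both started from the same μ_0 and driven by the same policy π_t, satisfies W_1(μ̃_{t,h}, μ_{t,h}) ≤ 2√p β_{t-1} L̄_{t-1}^{h-1} Σ_{i=0}^{h-1} ∫_S ‖σ_{t-1}(s, π_{t,i}(s, μ_{t,i}), μ_{t,i})‖_2 μ_{t,i}(ds), where L̄_{t-1} = 1 + 2(1+L_π)(L_f + 2√p β_{t-1} L_σ). -/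

import Mathlib

open MeasureTheory Finset

/-- Wasserstein-1 distance via the Kantorovich–Rubinstein dual formulation. -/
noncomputable def W1 {S : Type*} [MeasurableSpace S] [PseudoMetricSpace S]
    (μ ν : Measure S) : ℝ :=
  sSup {x | ∃ g : S → ℝ, LipschitzWith 1 g ∧ x = (∫ s, g s ∂μ) - ∫ s, g s ∂ν}

/-- Mean-field pushforward: `Φ(μ, π, g)(ds') = ∫ μ(ds) P[g(s, π(s,μ), μ) + ε ∈ ds']`,
where `ν` is the law of the i.i.d. noise `ε`. -/
noncomputable def MFStep {p : ℕ} {A : Type*}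
    (ν : Measure (EuclideanSpace ℝ (Fin p)))
    (μ : Measure (EuclideanSpace ℝ (Fin p)))
    (π : EuclideanSpace ℝ (Fin p) → Measure (EuclideanSpace ℝ (Fin p)) → A)
    (g : EuclideanSpace ℝ (Fin p) → A → Measure (EuclideanSpace ℝ (Fin p)) →
      EuclideanSpace ℝ (Fin p)) : Measure (EuclideanSpace ℝ (Fin p)) :=
  μ.bind (fun s => Measure.map (fun e => g s (π s μ) μ + e) ν)


open MeasureTheory Finset ENNReal NNReal

variable {p : ℕ}

local notation "S" => EuclideanSpace ℝ (Fin p)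

lemma lipschitzWith_of_le {E F : Type*} [SeminormedAddCommGroup E] [SeminormedAddCommGroup F]
    {L : ℝ} (hL : 0 ≤ L) {g : E → F} (h : ∀ x y, ‖g x - g y‖ ≤ L * ‖x - y‖) :
    LipschitzWith L.toNNReal g := by
  rw [lipschitzWith_iff_dist_le_mul]
  intro x y
  rw [dist_eq_norm, dist_eq_norm]
  simpa [Real.coe_toNNReal _ hL] using h x y

lemma kernelMeasurable (ν : Measure S) [SFinite ν] {c : S → S} (hc : Measurable c) :
    Measurable fun s => ν.map (fun e => c s + e) := by
  apply Measure.measurable_of_measurable_coe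
  intro A hA
  have h1 : ∀ s : S, ν.map (fun e => c s + e) A = ν (Prod.mk s ⁻¹' {q : S × S | c q.1 + q.2 ∈ A}) := by
    intro s
    rw [Measure.map_apply (measurable_const_add (c s)) hA]
    rfl
  simp only [h1]
  exact measurable_measure_prodMk_left (((hc.comp measurable_fst).add measurable_snd) hA)

lemma lintegral_bindK (ν : Measure S) [SFinite ν] (μ : Measure S) {c : S → S}
    (hc : Measurable c) {F : S → ℝ≥0∞} (hF : Measurable F) :
    ∫⁻ x, F x ∂(μ.bind (fun s => ν.map (fun e => c s + e)))
      = ∫⁻ s, ∫⁻ e, F (c s + e) ∂ν ∂μ := by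
  rw [Measure.lintegral_bind (kernelMeasurable ν hc).aemeasurable hF.aemeasurable]
  congr 1
  funext s
  rw [lintegral_map hF (measurable_const_add (c s))]

lemma isProb_bindK (ν : Measure S) [IsProbabilityMeasure ν] (μ : Measure S)
    [IsProbabilityMeasure μ] {c : S → S} (hc : Measurable c) :
    IsProbabilityMeasure (μ.bind (fun s => ν.map (fun e => c s + e))) := by
  constructor
  rw [Measure.bind_apply MeasurableSet.univ (kernelMeasurable ν hc).aemeasurable]
  have : ∀ s : S, ν.map (fun e => c s + e) Set.univ = 1 := by
    intro s
    rw [Measure.map_apply (measurable_const_add (c s)) MeasurableSet.univ]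
    simp
  simp [this]

lemma integrable_bindK_iff (ν : Measure S) [IsProbabilityMeasure ν] (μ : Measure S)
    {c : S → S} (hc : Measurable c) {g : S → ℝ} (hgm : Measurable g) :
    Integrable g (μ.bind (fun s => ν.map (fun e => c s + e)))
      ↔ ∫⁻ s, ∫⁻ e, (‖g (c s + e)‖₊ : ℝ≥0∞) ∂ν ∂μ < ∞ := by
  have h1 : ∫⁻ x, (‖g x‖₊ : ℝ≥0∞) ∂(μ.bind (fun s => ν.map (fun e => c s + e)))
      = ∫⁻ s, ∫⁻ e, (‖g (c s + e)‖₊ : ℝ≥0∞) ∂ν ∂μ :=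
    lintegral_bindK ν μ hc hgm.nnnorm.coe_nnreal_ennreal
  constructor
  · intro h
    rw [← h1]
    exact h.hasFiniteIntegral
  · intro h
    exact ⟨hgm.aestronglyMeasurable, by rw [HasFiniteIntegral]; simp only [enorm_eq_nnnorm]; rw [h1]; exact h⟩

lemma integral_bindK (ν : Measure S) [IsProbabilityMeasure ν] (μ : Measure S)
    [IsProbabilityMeasure μ] {c : S → S} (hc : Measurable c) {g : S → ℝ} (hgm : Measurable g)
    (hshift : ∀ x : S, Integrable (fun e => g (x + e)) ν)
    (hInt : Integrable g (μ.bind (fun s => ν.map (fun e => c s + e)))) :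
    Integrable (fun s => ∫ e, g (c s + e) ∂ν) μ ∧
      ∫ x, g x ∂(μ.bind (fun s => ν.map (fun e => c s + e))) = ∫ s, ∫ e, g (c s + e) ∂ν ∂μ := by
  set M := μ.bind (fun s => ν.map (fun e => c s + e)) with hM
  have hfin : ∫⁻ s, ∫⁻ e, (‖g (c s + e)‖₊ : ℝ≥0∞) ∂ν ∂μ < ∞ :=
    (integrable_bindK_iff ν μ hc hgm).1 hInt
  set Ip := fun s : S => ∫⁻ e, ENNReal.ofReal (g (c s + e)) ∂ν with hIp
  set Im := fun s : S => ∫⁻ e, ENNReal.ofReal (-g (c s + e)) ∂ν with hIm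
  have hmp : Measurable Ip := by
    apply Measurable.lintegral_prod_right' (f := fun q : S × S => ENNReal.ofReal (g (c q.1 + q.2)))
    exact ENNReal.measurable_ofReal.comp (hgm.comp ((hc.comp measurable_fst).add measurable_snd))
  have hmm : Measurable Im := by
    apply Measurable.lintegral_prod_right' (f := fun q : S × S => ENNReal.ofReal (-g (c q.1 + q.2)))
    exact ENNReal.measurable_ofReal.comp ((hgm.comp ((hc.comp measurable_fst).add measurable_snd)).neg)
  have hle : ∀ (u : ℝ), ENNReal.ofReal u ≤ (‖u‖₊ : ℝ≥0∞) := by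
    intro u
    rw [← enorm_eq_nnnorm, ← ofReal_norm]
    exact ENNReal.ofReal_le_ofReal (le_abs_self u)
  have hIpfin : ∫⁻ s, Ip s ∂μ < ∞ :=
    lt_of_le_of_lt (lintegral_mono fun s => lintegral_mono fun e => hle _) hfin
  have hImfin : ∫⁻ s, Im s ∂μ < ∞ := by
    refine lt_of_le_of_lt (lintegral_mono fun s => lintegral_mono fun e => ?_) hfin
    simpa [norm_neg] using hle (-g (c s + e))
  have hGeq : ∀ s : S, ∫ e, g (c s + e) ∂ν = (Ip s).toReal - (Im s).toReal := fun s =>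
    integral_eq_lintegral_pos_part_sub_lintegral_neg_part (hshift (c s))
  have hφp : Integrable (fun s => (Ip s).toReal) μ := by
    refine ⟨(hmp.ennreal_toReal).aestronglyMeasurable, ?_⟩
    rw [HasFiniteIntegral]
    have : (fun s => (‖(Ip s).toReal‖₊ : ℝ≥0∞)) =ᵐ[μ] Ip := by
      filter_upwards [ae_lt_top hmp hIpfin.ne] with s hs
      rw [← enorm_eq_nnnorm, ← ofReal_norm, Real.norm_eq_abs, abs_of_nonneg ENNReal.toReal_nonneg,
        ENNReal.ofReal_toReal hs.ne]
    simp only [enorm_eq_nnnorm]; rw [lintegral_congr_ae this]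
    exact hIpfin
  have hφm : Integrable (fun s => (Im s).toReal) μ := by
    refine ⟨(hmm.ennreal_toReal).aestronglyMeasurable, ?_⟩
    rw [HasFiniteIntegral]
    have : (fun s => (‖(Im s).toReal‖₊ : ℝ≥0∞)) =ᵐ[μ] Im := by
      filter_upwards [ae_lt_top hmm hImfin.ne] with s hs
      rw [← enorm_eq_nnnorm, ← ofReal_norm, Real.norm_eq_abs, abs_of_nonneg ENNReal.toReal_nonneg,
        ENNReal.ofReal_toReal hs.ne]
    simp only [enorm_eq_nnnorm]; rw [lintegral_congr_ae this]
    exact hImfin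
  have hGfun : (fun s => ∫ e, g (c s + e) ∂ν)
      = fun s => (Ip s).toReal - (Im s).toReal := funext hGeq
  constructor
  · rw [hGfun]; exact hφp.sub hφm
  · rw [integral_eq_lintegral_pos_part_sub_lintegral_neg_part hInt]
    have e1 : ∫⁻ x, ENNReal.ofReal (g x) ∂M = ∫⁻ s, Ip s ∂μ :=
      lintegral_bindK ν μ hc (ENNReal.measurable_ofReal.comp hgm)
    have e2 : ∫⁻ x, ENNReal.ofReal (-g x) ∂M = ∫⁻ s, Im s ∂μ :=
      lintegral_bindK ν μ hc (ENNReal.measurable_ofReal.comp hgm.neg)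
    rw [e1, e2, ← integral_toReal hmp.aemeasurable (ae_lt_top hmp hIpfin.ne),
      ← integral_toReal hmm.aemeasurable (ae_lt_top hmm hImfin.ne),
      ← integral_sub hφp hφm, hGfun]

lemma step_bound (ν : Measure S) [IsProbabilityMeasure ν]
    (μ1 μ2 : Measure S) [IsProbabilityMeasure μ1] [IsProbabilityMeasure μ2]
    {ctil c : S → S} (hctil : Measurable ctil) (hc : Measurable c)
    {Lc : ℝ} (hLc : 0 ≤ Lc) (hcLip : ∀ x y, ‖c x - c y‖ ≤ Lc * ‖x - y‖)
    {Δ : S → ℝ} (hΔ0 : ∀ s, 0 ≤ Δ s) (hΔ : ∀ᵐ s ∂μ1, ‖ctil s - c s‖ ≤ Δ s)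
    (hΔint : Integrable Δ μ1)
    {B D : ℝ} (hB : 0 ≤ B) (hD : ∫ s, Δ s ∂μ1 ≤ D)
    (IH : ∀ (L : ℝ≥0) (g : S → ℝ), LipschitzWith L g →
      (Integrable g μ1 ↔ Integrable g μ2) ∧ ∫ s, g s ∂μ1 - ∫ s, g s ∂μ2 ≤ L * B)
    (L : ℝ≥0) (g : S → ℝ) (hg : LipschitzWith L g) :
    (Integrable g (μ1.bind (fun s => ν.map (fun e => ctil s + e))) ↔
      Integrable g (μ2.bind (fun s => ν.map (fun e => c s + e)))) ∧
    ∫ x, g x ∂(μ1.bind (fun s => ν.map (fun e => ctil s + e)))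
      - ∫ x, g x ∂(μ2.bind (fun s => ν.map (fun e => c s + e))) ≤ L * (D + Lc * B) := by
  have hD0 : 0 ≤ D := le_trans (integral_nonneg hΔ0) hD
  have hRHS0 : 0 ≤ (L : ℝ) * (D + Lc * B) :=
    mul_nonneg L.coe_nonneg (add_nonneg hD0 (mul_nonneg hLc hB))
  have hgm : Measurable g := hg.continuous.measurable
  have hgd : ∀ x y : S, |g x - g y| ≤ (L : ℝ) * ‖x - y‖ := by
    intro x y
    have := hg.dist_le_mul x y
    rwa [Real.dist_eq, dist_eq_norm] at this
  -- integrability of shifted copies of g transfers between shifts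
  have hshift_of : ∀ x y : S, Integrable (fun e => g (x + e)) ν →
      Integrable (fun e => g (y + e)) ν := by
    intro x y hx
    have hb : Integrable (fun e => g (y + e) - g (x + e)) ν := by
      refine Integrable.mono' (integrable_const ((L : ℝ) * ‖y - x‖))
        (((hgm.comp (measurable_const_add y)).sub
          (hgm.comp (measurable_const_add x))).aestronglyMeasurable) ?_
      filter_upwards with e
      rw [Real.norm_eq_abs]
      have h1 := hgd (y + e) (x + e)
      simpa [add_sub_add_right_eq_sub] using h1
    exact (hx.add hb).congr (Filter.Eventually.of_forall fun e => by
      show g (x + e) + (g (y + e) - g (x + e)) = g (y + e); ring)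
  by_cases hI : Integrable (fun e : S => g e) ν
  case neg =>
    -- g is not integrable for any shift: both sides are non-integrable and `∫` are junk 0
    have hnone : ∀ x : S, ¬ Integrable (fun e => g (x + e)) ν := by
      intro x hx
      exact hI (by simpa using hshift_of x 0 hx)
    have hJ : ∀ x : S, ∫⁻ e, (‖g (x + e)‖₊ : ℝ≥0∞) ∂ν = ∞ := by
      intro x
      by_contra hne
      exact hnone x ⟨(hgm.comp (measurable_const_add x)).aestronglyMeasurable,
        lt_top_iff_ne_top.2 hne⟩
    have h1 : ¬ Integrable g (μ1.bind (fun s => ν.map (fun e => ctil s + e))) := by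
      rw [integrable_bindK_iff ν μ1 hctil hgm]
      simp [hJ, lintegral_const, measure_univ]
    have h2 : ¬ Integrable g (μ2.bind (fun s => ν.map (fun e => c s + e))) := by
      rw [integrable_bindK_iff ν μ2 hc hgm]
      simp [hJ, lintegral_const, measure_univ]
    refine ⟨iff_of_false h1 h2, ?_⟩
    rw [integral_undef h1, integral_undef h2, sub_zero]
    exact hRHS0
  case pos =>
    have hshift : ∀ x : S, Integrable (fun e => g (x + e)) ν := by
      intro x
      exact hshift_of 0 x (by simpa using hI)
    have habs : ∀ x : S, Integrable (fun e => |g (x + e)|) ν := fun x => (hshift x).abs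
    -- the key shifted-integral functions
    set Ψ : S → ℝ := fun x => ∫ e, g (x + e) ∂ν with hΨdef
    set Φ : S → ℝ := fun x => ∫ e, |g (x + e)| ∂ν with hΦdef
    have hdiff : ∀ u v : S, |Ψ u - Ψ v| ≤ (L : ℝ) * ‖u - v‖ := by
      intro u v
      rw [hΨdef]
      simp only
      rw [← integral_sub (hshift u) (hshift v)]
      calc |∫ e, (g (u + e) - g (v + e)) ∂ν| ≤ ∫ e, |g (u + e) - g (v + e)| ∂ν := by
            simpa [Real.norm_eq_abs] using
              norm_integral_le_integral_norm (fun e => g (u + e) - g (v + e)) (μ := ν)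
        _ ≤ ∫ _e, (L : ℝ) * ‖u - v‖ ∂ν := by
            refine integral_mono ((hshift u).sub (hshift v)).abs (integrable_const _) ?_
            intro e
            simpa [add_sub_add_right_eq_sub] using hgd (u + e) (v + e)
        _ = (L : ℝ) * ‖u - v‖ := by simp
    have hdiffa : ∀ u v : S, |Φ u - Φ v| ≤ (L : ℝ) * ‖u - v‖ := by
      intro u v
      rw [hΦdef]
      simp only
      rw [← integral_sub (habs u) (habs v)]
      calc |∫ e, (abs (g (u + e)) - abs (g (v + e))) ∂ν|
          ≤ ∫ e, abs (abs (g (u + e)) - abs (g (v + e))) ∂ν := by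
            simpa [Real.norm_eq_abs] using
              norm_integral_le_integral_norm (fun e => abs (g (u + e)) - abs (g (v + e))) (μ := ν)
        _ ≤ ∫ _e, (L : ℝ) * ‖u - v‖ ∂ν := by
            refine integral_mono ((habs u).sub (habs v)).abs (integrable_const _) ?_
            intro e
            refine le_trans (abs_abs_sub_abs_le_abs_sub _ _) ?_
            simpa [add_sub_add_right_eq_sub] using hgd (u + e) (v + e)
        _ = (L : ℝ) * ‖u - v‖ := by simp
    have hΨcont : Continuous Ψ := (lipschitzWith_of_le L.coe_nonneg
      (fun x y => by simpa [Real.norm_eq_abs] using hdiff x y)).continuous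
    have hΦcont : Continuous Φ := (lipschitzWith_of_le L.coe_nonneg
      (fun x y => by simpa [Real.norm_eq_abs] using hdiffa x y)).continuous
    -- Lipschitz bounds for the composed functions
    have hG2 : ∀ x y : S, |Ψ (c x) - Ψ (c y)| ≤ ((L : ℝ) * Lc) * ‖x - y‖ := by
      intro x y
      refine le_trans (hdiff (c x) (c y)) ?_
      rw [mul_assoc]
      exact mul_le_mul_of_nonneg_left (hcLip x y) L.coe_nonneg
    have hA2 : ∀ x y : S, |Φ (c x) - Φ (c y)| ≤ ((L : ℝ) * Lc) * ‖x - y‖ := by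
      intro x y
      refine le_trans (hdiffa (c x) (c y)) ?_
      rw [mul_assoc]
      exact mul_le_mul_of_nonneg_left (hcLip x y) L.coe_nonneg
    have hG2lip : LipschitzWith ((L : ℝ) * Lc).toNNReal (fun s => Ψ (c s)) :=
      lipschitzWith_of_le (mul_nonneg L.coe_nonneg hLc)
        (fun x y => by simpa [Real.norm_eq_abs] using hG2 x y)
    have hA2lip : LipschitzWith ((L : ℝ) * Lc).toNNReal (fun s => Φ (c s)) :=
      lipschitzWith_of_le (mul_nonneg L.coe_nonneg hLc)
        (fun x y => by simpa [Real.norm_eq_abs] using hA2 x y)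
    have hcoe : (((L : ℝ) * Lc).toNNReal : ℝ) = (L : ℝ) * Lc :=
      Real.coe_toNNReal _ (mul_nonneg L.coe_nonneg hLc)
    -- `ofReal ∘ Φ` matches the lintegral of the nnnorm
    have hAeq : ∀ x : S, ENNReal.ofReal (Φ x) = ∫⁻ e, (‖g (x + e)‖₊ : ℝ≥0∞) ∂ν := by
      intro x
      rw [hΦdef]
      simp only
      rw [ofReal_integral_eq_lintegral_ofReal (habs x)
        (Filter.Eventually.of_forall fun e => abs_nonneg _)]
      congr 1
      funext e
      rw [← Real.norm_eq_abs, ofReal_norm, enorm_eq_nnnorm]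
    -- integrability characterizations
    have key : ∀ (μ' : Measure S) (c' : S → S), Measurable c' → IsProbabilityMeasure μ' →
        (Integrable g (μ'.bind (fun s => ν.map (fun e => c' s + e)))
          ↔ Integrable (fun s => Φ (c' s)) μ') := by
      intro μ' c' hc' hμ'
      rw [integrable_bindK_iff ν μ' hc' hgm]
      have hnn : 0 ≤ᵐ[μ'] fun s => Φ (c' s) :=
        Filter.Eventually.of_forall fun s => integral_nonneg fun e => abs_nonneg _
      have hmeas : Measurable fun s => Φ (c' s) := hΦcont.measurable.comp hc'
      have hl : ∫⁻ s, ENNReal.ofReal (Φ (c' s)) ∂μ'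
          = ∫⁻ s, ∫⁻ e, (‖g (c' s + e)‖₊ : ℝ≥0∞) ∂ν ∂μ' :=
        lintegral_congr fun s => hAeq (c' s)
      constructor
      · intro h
        exact ⟨hmeas.aestronglyMeasurable,
          (hasFiniteIntegral_iff_ofReal hnn).2 (by rw [hl]; exact h)⟩
      · intro h
        have := (hasFiniteIntegral_iff_ofReal hnn).1 h.hasFiniteIntegral
        rwa [hl] at this
    -- transfer of integrability of `Φ ∘ ctil` and `Φ ∘ c` under `μ1`
    have hbnd1 : ∀ᵐ s ∂μ1, ‖Φ (ctil s) - Φ (c s)‖ ≤ (L : ℝ) * Δ s := by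
      filter_upwards [hΔ] with s hs
      rw [Real.norm_eq_abs]
      exact le_trans (hdiffa (ctil s) (c s)) (mul_le_mul_of_nonneg_left hs L.coe_nonneg)
    have hsubint : Integrable (fun s => Φ (ctil s) - Φ (c s)) μ1 := by
      refine Integrable.mono' (hΔint.const_mul (L : ℝ))
        (((hΦcont.measurable.comp hctil).sub
          (hΦcont.measurable.comp hc)).aestronglyMeasurable) hbnd1
    have transfer1 : Integrable (fun s => Φ (ctil s)) μ1 ↔ Integrable (fun s => Φ (c s)) μ1 := by
      constructor
      · intro h
        exact (h.sub hsubint).congr (Filter.Eventually.of_forall fun s => by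
          show Φ (ctil s) - (Φ (ctil s) - Φ (c s)) = Φ (c s); ring)
      · intro h
        exact (h.add hsubint).congr (Filter.Eventually.of_forall fun s => by
          show Φ (c s) + (Φ (ctil s) - Φ (c s)) = Φ (ctil s); ring)
    have transfer2 : Integrable (fun s => Φ (c s)) μ1 ↔ Integrable (fun s => Φ (c s)) μ2 :=
      (IH _ _ hA2lip).1
    have iffmain : Integrable g (μ1.bind (fun s => ν.map (fun e => ctil s + e)))
        ↔ Integrable g (μ2.bind (fun s => ν.map (fun e => c s + e))) := by
      rw [key μ1 ctil hctil inferInstance, key μ2 c hc inferInstance]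
      exact transfer1.trans transfer2
    refine ⟨iffmain, ?_⟩
    by_cases hint2 : Integrable g (μ2.bind (fun s => ν.map (fun e => c s + e)))
    · have hint1 := iffmain.2 hint2
      obtain ⟨hG1int, hG1eq⟩ := integral_bindK ν μ1 hctil hgm hshift hint1
      obtain ⟨hG2int, hG2eq⟩ := integral_bindK ν μ2 hc hgm hshift hint2
      rw [hG1eq, hG2eq]
      have hG2int1 : Integrable (fun s => Ψ (c s)) μ1 := (IH _ _ hG2lip).1.2 hG2int
      have hG1int' : Integrable (fun s => Ψ (ctil s)) μ1 := hG1int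
      have hdiffae : ∀ᵐ s ∂μ1, Ψ (ctil s) - Ψ (c s) ≤ (L : ℝ) * Δ s := by
        filter_upwards [hΔ] with s hs
        exact le_trans (le_abs_self _) (le_trans (hdiff _ _)
          (mul_le_mul_of_nonneg_left hs L.coe_nonneg))
      have e1 : ∫ s, Ψ (ctil s) ∂μ1 - ∫ s, Ψ (c s) ∂μ2
          = (∫ s, (Ψ (ctil s) - Ψ (c s)) ∂μ1) + ((∫ s, Ψ (c s) ∂μ1) - ∫ s, Ψ (c s) ∂μ2) := by
        rw [integral_sub hG1int' hG2int1]; ring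
      calc ∫ s, ∫ e, g (ctil s + e) ∂ν ∂μ1 - ∫ s, ∫ e, g (c s + e) ∂ν ∂μ2
          = (∫ s, (Ψ (ctil s) - Ψ (c s)) ∂μ1)
            + ((∫ s, Ψ (c s) ∂μ1) - ∫ s, Ψ (c s) ∂μ2) := e1
        _ ≤ (L : ℝ) * D + ((L : ℝ) * Lc) * B := by
            refine add_le_add ?_ ?_
            · refine le_trans (integral_mono_ae (hG1int'.sub hG2int1)
                (hΔint.const_mul (L : ℝ)) hdiffae) ?_
              rw [integral_const_mul]
              exact mul_le_mul_of_nonneg_left hD L.coe_nonneg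
            · have := (IH _ _ hG2lip).2
              rwa [hcoe] at this
        _ = (L : ℝ) * (D + Lc * B) := by ring
    · have hint1 : ¬ Integrable g (μ1.bind (fun s => ν.map (fun e => ctil s + e))) := by
        rw [iffmain]; exact hint2
      rw [integral_undef hint1, integral_undef hint2, sub_zero]
      exact hRHS0

lemma bind_of_not_aemeasurable (ν : Measure S) [IsProbabilityMeasure ν]
    (μ' : Measure S) {ctil : S → S} (h : ¬ AEMeasurable ctil μ') :
    μ'.bind (fun s => ν.map (fun e => ctil s + e)) = 0 := by
  -- it suffices to show the kernel is not a.e.-measurable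
  have hK : ¬ AEMeasurable (fun s => ν.map (fun e => ctil s + e)) μ' := by
    intro hK
    apply h
    -- extract each coordinate of `ctil` from the kernel
    have hcoord : ∀ i : Fin p, AEMeasurable (fun s => ctil s i) μ' := by
      intro i
      -- the strictly monotone continuous test statistic
      set T : ℝ → ℝ := fun t => ∫ e : S, Real.arctan (t + e i) ∂ν with hT
      have hint : ∀ t : ℝ, Integrable (fun e : S => Real.arctan (t + e i)) ν := by
        intro t
        refine Integrable.mono' (integrable_const (Real.pi / 2))
          ((Real.continuous_arctan.measurable.comp
            (((measurable_pi_apply i).comp (WithLp.measurable_ofLp 2 (Fin p → ℝ))).const_add t)).aestronglyMeasurable) ?_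
        filter_upwards with e
        rw [Real.norm_eq_abs, abs_le]
        exact ⟨le_of_lt (by simpa using Real.neg_pi_div_two_lt_arctan (t + e i)),
          le_of_lt (Real.arctan_lt_pi_div_two _)⟩
      have hTmono : StrictMono T := by
        intro t t' htt
        have hsub : Integrable
            (fun e : S => Real.arctan (t' + e i) - Real.arctan (t + e i)) ν :=
          (hint t').sub (hint t)
        have hpos : 0 < ∫ e : S, (Real.arctan (t' + e i) - Real.arctan (t + e i)) ∂ν := by
          rw [integral_pos_iff_support_of_nonneg_ae ?_ hsub]
          · have : Function.support
                (fun e : S => Real.arctan (t' + e i) - Real.arctan (t + e i)) = Set.univ := by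
              ext e
              simp only [Function.mem_support, Set.mem_univ, iff_true]
              have := Real.arctan_strictMono (by linarith : t + e i < t' + e i)
              exact sub_ne_zero.2 (ne_of_gt this)
            rw [this]
            simp
          · filter_upwards with e
            have := Real.arctan_strictMono (by linarith : t + e i < t' + e i)
            simp only [Pi.zero_apply]
            linarith
        have := integral_sub (hint t') (hint t)
        rw [hT]
        simp only
        rw [this] at hpos
        linarith
      have hTcont : Continuous T := by
        refine continuous_of_dominated ?_ ?_ (integrable_const (Real.pi / 2)) ?_
        · exact fun t => (Real.continuous_arctan.measurable.comp
            (((measurable_pi_apply i).comp (WithLp.measurable_ofLp 2 (Fin p → ℝ))).const_add t)).aestronglyMeasurable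
        · intro t
          filter_upwards with e
          rw [Real.norm_eq_abs, abs_le]
          exact ⟨le_of_lt (by simpa using Real.neg_pi_div_two_lt_arctan (t + e i)),
            le_of_lt (Real.arctan_lt_pi_div_two _)⟩
        · filter_upwards with e
          exact Real.continuous_arctan.comp (continuous_id.add continuous_const)
      have hembed : MeasurableEmbedding T :=
        hTcont.measurableEmbedding hTmono.injective
      -- the measurable functional on measures
      set ψ : Measure S → ℝ≥0∞ :=
        fun m => ∫⁻ z, ENNReal.ofReal (Real.arctan (z i) + 2) ∂m with hψ
      have hψmeas : Measurable ψ :=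
        Measure.measurable_lintegral (ENNReal.measurable_ofReal.comp
          ((Real.continuous_arctan.measurable.comp ((measurable_pi_apply i).comp (WithLp.measurable_ofLp 2 _))).add_const 2))
      have hid : ∀ s : S, (ψ (ν.map (fun e => ctil s + e))).toReal = T (ctil s i) + 2 := by
        intro s
        rw [hψ]
        simp only
        have hmi : Measurable fun z : S => ENNReal.ofReal (Real.arctan (z i) + 2) := by
          exact ENNReal.measurable_ofReal.comp
            ((Real.continuous_arctan.measurable.comp ((measurable_pi_apply i).comp (WithLp.measurable_ofLp 2 _))).add_const 2)
        rw [lintegral_map hmi (measurable_const_add (ctil s))]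
        have hintg : Integrable (fun e : S => Real.arctan (ctil s i + e i) + 2) ν :=
          (hint (ctil s i)).add (integrable_const 2)
        have hptwise : ∀ e : S, Real.arctan ((ctil s + e) i) + 2
            = Real.arctan (ctil s i + e i) + 2 := by
          intro e
          rfl
        have h1 : ∫⁻ e, ENNReal.ofReal (Real.arctan ((ctil s + e) i) + 2) ∂ν
            = ENNReal.ofReal (∫ e : S, (Real.arctan (ctil s i + e i) + 2) ∂ν) := by
          have hnn : 0 ≤ᵐ[ν] fun e : S => Real.arctan (ctil s i + e i) + 2 := by
            filter_upwards with e
            have h2 := Real.neg_pi_div_two_lt_arctan (ctil s i + e i)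
            have h3 := Real.pi_lt_d2
            simp only [Pi.zero_apply]
            linarith
          rw [lintegral_congr (fun e => by rw [hptwise e])]
          exact (ofReal_integral_eq_lintegral_ofReal hintg hnn).symm
        rw [h1, ENNReal.toReal_ofReal ?_]
        · rw [integral_add (hint (ctil s i)) (integrable_const 2)]
          simp [hT]
        · refine integral_nonneg fun e => ?_
          show (0:ℝ) ≤ Real.arctan (ctil s i + e i) + 2
          have h2 := Real.neg_pi_div_two_lt_arctan (ctil s i + e i)
          have h3 := Real.pi_lt_d2
          linarith
      have haem : AEMeasurable (fun s => T (ctil s i) + 2) μ' := by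
        have h0 : AEMeasurable (fun s => (ψ (ν.map (fun e => ctil s + e))).toReal) μ' :=
          (hψmeas.ennreal_toReal).comp_aemeasurable hK
        have : (fun s => (ψ (ν.map (fun e => ctil s + e))).toReal)
            = fun s => T (ctil s i) + 2 := funext hid
        rwa [this] at h0
      have haem2 : AEMeasurable (fun s => T (ctil s i)) μ' := by
        have := haem.sub_const 2
        simpa using this
      exact hembed.aemeasurable_comp_iff.1 haem2
    -- assemble the coordinates
    choose c' hc'meas hc'eq using fun i => (hcoord i)
    have hc'm : Measurable (fun s => (WithLp.toLp 2 (fun i => c' i s) : EuclideanSpace ℝ (Fin p))) := by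
      apply (WithLp.measurable_toLp 2 _).comp
      apply measurable_pi_iff.2
      intro i
      exact hc'meas i
    refine ⟨fun s => WithLp.toLp 2 (fun i => c' i s), hc'm, ?_⟩
    have hall : ∀ᵐ s ∂μ', ∀ i, ctil s i = c' i s := ae_all_iff.2 fun i => hc'eq i
    filter_upwards [hall] with s hs
    ext i
    exact hs i
  rw [Measure.bind, Measure.map_of_not_aemeasurable hK, Measure.join_zero]

lemma W1_self {T : Type*} [MeasurableSpace T] [PseudoMetricSpace T] (μ : Measure T) :
    W1 μ μ = 0 := by
  have hset : {x | ∃ g : T → ℝ, LipschitzWith 1 g ∧ x = (∫ s, g s ∂μ) - ∫ s, g s ∂μ}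
      = {(0 : ℝ)} := by
    ext x
    constructor
    · rintro ⟨g, hg, rfl⟩
      simp
    · rintro rfl
      exact ⟨fun _ => 0, (LipschitzWith.const 0).weaken zero_le_one, by simp⟩
  rw [W1, hset, csSup_singleton]

lemma zero_mem_W1set {T : Type*} [MeasurableSpace T] [PseudoMetricSpace T] (μ' ν' : Measure T) :
    (0 : ℝ) ∈ {x | ∃ g : T → ℝ, LipschitzWith 1 g ∧ x = (∫ s, g s ∂μ') - ∫ s, g s ∂ν'} :=
  ⟨fun _ => 0, (LipschitzWith.const 0).weaken zero_le_one, by simp⟩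

/-- **Wasserstein bound between hallucinated and true mean-field flows.**
Both flows start from the same `μ₀`, are driven by the same policies `π h`, and evolve by
`Φ` under the hallucinated dynamics `f̃` resp. the true dynamics `f`.  Then for every
`h ≥ 1`,
`W₁(μ̃_h, μ_h) ≤ 2√p β L̄^{h-1} ∑_{i<h} ∫ ‖σ(s, π_i(s,μ_i), μ_i)‖₂ μ_i(ds)`,
with `L̄ = 1 + 2(1+L_π)(L_f + 2√p β L_σ)`. -/
theorem mean_field_flow_wasserstein_bound
    {p : ℕ} {A : Type*} [NormedAddCommGroup A]
    (Lf Lσ Lπ β : ℝ) (hLf : 0 ≤ Lf) (hLσ : 0 ≤ Lσ) (hLπ : 0 ≤ Lπ) (hβ : 0 < β)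
    (f m : EuclideanSpace ℝ (Fin p) → A → Measure (EuclideanSpace ℝ (Fin p)) →
      EuclideanSpace ℝ (Fin p))
    (σ η : EuclideanSpace ℝ (Fin p) → A → Measure (EuclideanSpace ℝ (Fin p)) →
      EuclideanSpace ℝ (Fin p))
    (ftilde : EuclideanSpace ℝ (Fin p) → A → Measure (EuclideanSpace ℝ (Fin p)) →
      EuclideanSpace ℝ (Fin p))
    (π : ℕ → EuclideanSpace ℝ (Fin p) → Measure (EuclideanSpace ℝ (Fin p)) → A)
    -- hallucinated dynamics f̃(z) = m(z) + β diag(σ(z)) η(z) with η ∈ [-1,1]^p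
    (hη : ∀ s a μ i, η s a μ i ∈ Set.Icc (-1 : ℝ) 1)
    (hft : ∀ s a μ i, ftilde s a μ i = m s a μ i + β * σ s a μ i * η s a μ i)
    -- calibration (well-calibrated event): ‖m(z) − f(z)‖₂ ≤ √p β ‖σ(z)‖₂
    (hcal : ∀ s a μ, ‖m s a μ - f s a μ‖ ≤ Real.sqrt p * β * ‖σ s a μ‖)
    -- Lipschitz assumptions
    (hf : ∀ s s' a a' μ μ', ‖f s a μ - f s' a' μ'‖ ≤ Lf * (‖s - s'‖ + ‖a - a'‖ + W1 μ μ'))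
    (hσ : ∀ s s' a a' μ μ', ‖σ s a μ - σ s' a' μ'‖ ≤ Lσ * (‖s - s'‖ + ‖a - a'‖ + W1 μ μ'))
    (hπ : ∀ h s s' μ μ', ‖π h s μ - π h s' μ'‖ ≤ Lπ * (‖s - s'‖ + W1 μ μ'))
    -- noise law, initial distribution, and the two mean-field flows
    (ν : Measure (EuclideanSpace ℝ (Fin p))) [IsProbabilityMeasure ν]
    (μ0 : Measure (EuclideanSpace ℝ (Fin p))) [IsProbabilityMeasure μ0]
    (μtil μ : ℕ → Measure (EuclideanSpace ℝ (Fin p)))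
    (hμtil0 : μtil 0 = μ0) (hμ0 : μ 0 = μ0)
    (hμtilstep : ∀ h, μtil (h + 1) = MFStep ν (μtil h) (π h) ftilde)
    (hμstep : ∀ h, μ (h + 1) = MFStep ν (μ h) (π h) f)
    (hint : ∀ i, Integrable (fun s => ‖σ s (π i s (μ i)) (μ i)‖) (μ i)) :
    ∀ h, 1 ≤ h →
      W1 (μtil h) (μ h)
        ≤ 2 * Real.sqrt p * β
            * (1 + 2 * (1 + Lπ) * (Lf + 2 * Real.sqrt p * β * Lσ)) ^ (h - 1)
            * ∑ i ∈ range h, ∫ s, ‖σ s (π i s (μ i)) (μ i)‖ ∂(μ i) := by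
  have hsp0 : 0 ≤ Real.sqrt p := Real.sqrt_nonneg _
  set sp := Real.sqrt p with hspdef
  have hK0 : 0 ≤ (1 + Lπ) * (Lf + 2 * sp * β * Lσ) := by positivity
  have hLbar1 : (1 : ℝ) ≤ 1 + 2 * (1 + Lπ) * (Lf + 2 * sp * β * Lσ) := by nlinarith
  have hLbar0 : (0 : ℝ) ≤ 1 + 2 * (1 + Lπ) * (Lf + 2 * sp * β * Lσ) := by linarith
  have hb0 : ∀ i, 0 ≤ ∫ s, ‖σ s (π i s (μ i)) (μ i)‖ ∂(μ i) :=
    fun i => integral_nonneg fun s => norm_nonneg _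
  set BB : ℕ → ℝ := fun n => 2 * sp * β
      * (1 + 2 * (1 + Lπ) * (Lf + 2 * sp * β * Lσ)) ^ (n - 1)
      * ∑ i ∈ range n, ∫ s, ‖σ s (π i s (μ i)) (μ i)‖ ∂(μ i) with hBdef
  have hB0 : ∀ n, 0 ≤ BB n := by
    intro n
    rw [hBdef]
    apply mul_nonneg (mul_nonneg (by positivity) (pow_nonneg hLbar0 _))
    exact Finset.sum_nonneg fun i _ => hb0 i
  have hB00 : BB 0 = 0 := by simp [hBdef]
  -- p = 0 : all norms vanish
  have hzero : p = 0 → ∀ x : EuclideanSpace ℝ (Fin p), ‖x‖ = 0 := by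
    intro hp x
    rw [EuclideanSpace.norm_eq]
    subst hp
    simp
  have hsp1 : 1 ≤ p → (1 : ℝ) ≤ sp := by
    intro hp
    rw [hspdef, show (1 : ℝ) = Real.sqrt 1 by rw [Real.sqrt_one]]
    exact Real.sqrt_le_sqrt (by exact_mod_cast hp)
  -- ‖f̃ - f‖ ≤ 2√p β ‖σ‖
  have hftf : ∀ s a μμ, ‖ftilde s a μμ - f s a μμ‖ ≤ 2 * sp * β * ‖σ s a μμ‖ := by
    intro s a μμ
    have hftm : ‖ftilde s a μμ - m s a μμ‖ ≤ β * ‖σ s a μμ‖ := by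
      rw [EuclideanSpace.norm_eq, EuclideanSpace.norm_eq]
      have hrhs : β * Real.sqrt (∑ i, ‖σ s a μμ i‖ ^ 2)
          = Real.sqrt (∑ i, (β * ‖σ s a μμ i‖) ^ 2) := by
        rw [show (∑ i, (β * ‖σ s a μμ i‖) ^ 2) = β ^ 2 * ∑ i, ‖σ s a μμ i‖ ^ 2 by
            rw [Finset.mul_sum]; congr 1; funext i; ring,
          Real.sqrt_mul (sq_nonneg β), Real.sqrt_sq hβ.le]
      rw [hrhs]
      apply Real.sqrt_le_sqrt
      apply Finset.sum_le_sum
      intro i _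
      have hcomp : (ftilde s a μμ - m s a μμ) i = β * σ s a μμ i * η s a μμ i := by
        have h0 : (ftilde s a μμ - m s a μμ) i = ftilde s a μμ i - m s a μμ i := rfl
        rw [h0, hft s a μμ i]
        ring
      rw [hcomp, Real.norm_eq_abs, Real.norm_eq_abs]
      have hη1 : |η s a μμ i| ≤ 1 := abs_le.2 ⟨(hη s a μμ i).1, (hη s a μμ i).2⟩
      have h1 : |β * σ s a μμ i * η s a μμ i| ≤ β * |σ s a μμ i| := by
        rw [abs_mul, abs_mul, abs_of_pos hβ]
        calc β * |σ s a μμ i| * |η s a μμ i| ≤ β * |σ s a μμ i| * 1 :=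
              mul_le_mul_of_nonneg_left hη1 (by positivity)
          _ = β * |σ s a μμ i| := mul_one _
      calc |β * σ s a μμ i * η s a μμ i| ^ 2 ≤ (β * |σ s a μμ i|) ^ 2 :=
            pow_le_pow_left₀ (abs_nonneg _) h1 2
        _ = (β * |σ s a μμ i|) ^ 2 := rfl
    have htri : ‖ftilde s a μμ - f s a μμ‖
        ≤ ‖ftilde s a μμ - m s a μμ‖ + ‖m s a μμ - f s a μμ‖ := by
      have h0 := norm_add_le (ftilde s a μμ - m s a μμ) (m s a μμ - f s a μμ)
      rwa [sub_add_sub_cancel] at h0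
    have hcal' := hcal s a μμ
    rcases Nat.eq_zero_or_pos p with hp | hp
    · have h1 := hzero hp (ftilde s a μμ - f s a μμ)
      have h2 := hzero hp (σ s a μμ)
      rw [h1, h2]
      simp
    · have hsp1' := hsp1 hp
      have hβσ : β * ‖σ s a μμ‖ ≤ sp * β * ‖σ s a μμ‖ := by
        nlinarith [mul_nonneg (mul_nonneg (sub_nonneg.2 hsp1') hβ.le)
          (norm_nonneg (σ s a μμ))]
      calc ‖ftilde s a μμ - f s a μμ‖
          ≤ β * ‖σ s a μμ‖ + sp * β * ‖σ s a μμ‖ := le_trans htri (add_le_add hftm hcal')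
        _ ≤ sp * β * ‖σ s a μμ‖ + sp * β * ‖σ s a μμ‖ := by linarith
        _ = 2 * sp * β * ‖σ s a μμ‖ := by ring
  -- Lipschitz bound for the true drift at step n
  have hcLip : ∀ n x y, ‖f x (π n x (μ n)) (μ n) - f y (π n y (μ n)) (μ n)‖
      ≤ (Lf * (1 + Lπ)) * ‖x - y‖ := by
    intro n x y
    have h1 := hf x y (π n x (μ n)) (π n y (μ n)) (μ n) (μ n)
    have h2 := hπ n x y (μ n) (μ n)
    rw [W1_self] at h1 h2
    have h3 : ‖π n x (μ n) - π n y (μ n)‖ ≤ Lπ * ‖x - y‖ := by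
      calc ‖π n x (μ n) - π n y (μ n)‖ ≤ Lπ * (‖x - y‖ + 0) := h2
        _ = Lπ * ‖x - y‖ := by ring
    calc ‖f x (π n x (μ n)) (μ n) - f y (π n y (μ n)) (μ n)‖
        ≤ Lf * (‖x - y‖ + ‖π n x (μ n) - π n y (μ n)‖ + 0) := h1
      _ ≤ Lf * (‖x - y‖ + Lπ * ‖x - y‖ + 0) :=
          mul_le_mul_of_nonneg_left (by linarith) hLf
      _ = (Lf * (1 + Lπ)) * ‖x - y‖ := by ring
  have hcmeas : ∀ n, Measurable (fun x => f x (π n x (μ n)) (μ n)) := by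
    intro n
    exact (lipschitzWith_of_le (by positivity) (hcLip n)).continuous.measurable
  -- Lipschitz bound for the σ-norm at step n
  have hσLipb : ∀ n x y, ‖‖σ x (π n x (μ n)) (μ n)‖ - ‖σ y (π n y (μ n)) (μ n)‖‖
      ≤ (Lσ * (1 + Lπ)) * ‖x - y‖ := by
    intro n x y
    have h1 := hσ x y (π n x (μ n)) (π n y (μ n)) (μ n) (μ n)
    have h2 := hπ n x y (μ n) (μ n)
    rw [W1_self] at h1 h2
    have h3 : ‖π n x (μ n) - π n y (μ n)‖ ≤ Lπ * ‖x - y‖ := by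
      calc ‖π n x (μ n) - π n y (μ n)‖ ≤ Lπ * (‖x - y‖ + 0) := h2
        _ = Lπ * ‖x - y‖ := by ring
    calc ‖‖σ x (π n x (μ n)) (μ n)‖ - ‖σ y (π n y (μ n)) (μ n)‖‖
        ≤ ‖σ x (π n x (μ n)) (μ n) - σ y (π n y (μ n)) (μ n)‖ := by
          rw [Real.norm_eq_abs]
          exact abs_norm_sub_norm_le _ _
      _ ≤ Lσ * (‖x - y‖ + ‖π n x (μ n) - π n y (μ n)‖ + 0) := h1
      _ ≤ Lσ * (‖x - y‖ + Lπ * ‖x - y‖ + 0) :=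
          mul_le_mul_of_nonneg_left (by linarith) hLσ
      _ = (Lσ * (1 + Lπ)) * ‖x - y‖ := by ring
  have hσLip : ∀ n, LipschitzWith (Lσ * (1 + Lπ)).toNNReal
      (fun s => ‖σ s (π n s (μ n)) (μ n)‖) :=
    fun n => lipschitzWith_of_le (by positivity) (hσLipb n)
  -- main induction
  have main : ∀ n, (IsProbabilityMeasure (μtil n) ∧ IsProbabilityMeasure (μ n) ∧
      ∀ (L : ℝ≥0) (g : EuclideanSpace ℝ (Fin p) → ℝ), LipschitzWith L g →
        (Integrable g (μtil n) ↔ Integrable g (μ n)) ∧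
        (∫ s, g s ∂(μtil n)) - ∫ s, g s ∂(μ n) ≤ (L : ℝ) * BB n)
      ∨ (μtil n = 0 ∧ IsProbabilityMeasure (μ n)) := by
    intro n
    induction n with
    | zero =>
      left
      rw [hμtil0, hμ0]
      refine ⟨inferInstance, inferInstance, fun L g hg => ⟨Iff.rfl, ?_⟩⟩
      rw [sub_self, hB00, mul_zero]
    | succ n ih =>
      have hμsucc : μ (n + 1) = (μ n).bind
          (fun s => ν.map (fun e => f s (π n s (μ n)) (μ n) + e)) := by
        rw [hμstep n]; rfl
      rcases ih with hP | hdeg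
      · haveI hi1 : IsProbabilityMeasure (μtil n) := hP.1
        haveI hi2 : IsProbabilityMeasure (μ n) := hP.2.1
        haveI hprob2 : IsProbabilityMeasure (μ (n + 1)) := by
          rw [hμsucc]; exact isProb_bindK ν (μ n) (hcmeas n)
        by_cases hAE : AEMeasurable (fun s => ftilde s (π n s (μtil n)) (μtil n)) (μtil n)
        · -- good case
          have hc'meas : Measurable (hAE.mk _) := hAE.measurable_mk
          have hc'ae : (fun s => ftilde s (π n s (μtil n)) (μtil n)) =ᵐ[μtil n] hAE.mk _ :=
            hAE.ae_eq_mk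
          have hker : (fun s => ν.map (fun e => ftilde s (π n s (μtil n)) (μtil n) + e))
              =ᵐ[μtil n] (fun s => ν.map (fun e => hAE.mk _ s + e)) :=
            hc'ae.mono fun s hs => congrArg (fun z => ν.map (fun e => z + e)) hs
          have hbind1 : μtil (n + 1)
              = (μtil n).bind (fun s => ν.map (fun e => hAE.mk _ s + e)) := by
            rw [hμtilstep n]
            show (μtil n).bind
              (fun s => ν.map (fun e => ftilde s (π n s (μtil n)) (μtil n) + e)) = _
            rw [Measure.bind, Measure.bind, Measure.map_congr hker]
          haveI hprob1 : IsProbabilityMeasure (μtil (n + 1)) := by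
            rw [hbind1]; exact isProb_bindK ν (μtil n) hc'meas
          -- bounds on the Wasserstein distance at time n
          have hub : ∀ x ∈ {x | ∃ g : EuclideanSpace ℝ (Fin p) → ℝ, LipschitzWith 1 g ∧
              x = (∫ s, g s ∂(μtil n)) - ∫ s, g s ∂(μ n)}, x ≤ BB n := by
            rintro x ⟨g, hg, rfl⟩
            have h9 := (hP.2.2 1 g hg).2
            simpa using h9
          have hW1le : W1 (μtil n) (μ n) ≤ BB n := Real.sSup_le hub (hB0 n)
          have hW10 : 0 ≤ W1 (μtil n) (μ n) :=
            le_csSup ⟨BB n, hub⟩ (zero_mem_W1set (μtil n) (μ n))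
          -- pointwise drift discrepancy bound
          have hΔ0 : ∀ s, 0 ≤ 2 * sp * β * ‖σ s (π n s (μ n)) (μ n)‖
              + ((1 + Lπ) * (Lf + 2 * sp * β * Lσ)) * W1 (μtil n) (μ n) := by
            intro s
            have h9 := norm_nonneg (σ s (π n s (μ n)) (μ n))
            have h10 := mul_nonneg hK0 hW10
            positivity
          have hΔptwise : ∀ s, ‖ftilde s (π n s (μtil n)) (μtil n)
                - f s (π n s (μ n)) (μ n)‖
              ≤ 2 * sp * β * ‖σ s (π n s (μ n)) (μ n)‖
                + ((1 + Lπ) * (Lf + 2 * sp * β * Lσ)) * W1 (μtil n) (μ n) := by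
            intro s
            have t1 : ‖ftilde s (π n s (μtil n)) (μtil n) - f s (π n s (μtil n)) (μtil n)‖
                ≤ 2 * sp * β * ‖σ s (π n s (μtil n)) (μtil n)‖ :=
              hftf s (π n s (μtil n)) (μtil n)
            have t3 : ‖π n s (μtil n) - π n s (μ n)‖ ≤ Lπ * (0 + W1 (μtil n) (μ n)) := by
              have h9 := hπ n s s (μtil n) (μ n)
              simpa using h9
            have t2 : ‖f s (π n s (μtil n)) (μtil n) - f s (π n s (μ n)) (μ n)‖
                ≤ Lf * (0 + ‖π n s (μtil n) - π n s (μ n)‖ + W1 (μtil n) (μ n)) := by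
              have h9 := hf s s (π n s (μtil n)) (π n s (μ n)) (μtil n) (μ n)
              simpa using h9
            have t4 : ‖σ s (π n s (μtil n)) (μtil n)‖ ≤ ‖σ s (π n s (μ n)) (μ n)‖
                + Lσ * (0 + ‖π n s (μtil n) - π n s (μ n)‖ + W1 (μtil n) (μ n)) := by
              have h5 := hσ s s (π n s (μtil n)) (π n s (μ n)) (μtil n) (μ n)
              have h6 : ‖σ s (π n s (μtil n)) (μtil n)‖ ≤ ‖σ s (π n s (μ n)) (μ n)‖
                  + ‖σ s (π n s (μtil n)) (μtil n) - σ s (π n s (μ n)) (μ n)‖ := by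
                have h7 := norm_add_le (σ s (π n s (μ n)) (μ n))
                  (σ s (π n s (μtil n)) (μtil n) - σ s (π n s (μ n)) (μ n))
                rwa [add_sub_cancel] at h7
              have h8 : ‖s - s‖ = 0 := by simp
              rw [h8] at h5
              linarith
            have htri : ‖ftilde s (π n s (μtil n)) (μtil n) - f s (π n s (μ n)) (μ n)‖
                ≤ ‖ftilde s (π n s (μtil n)) (μtil n) - f s (π n s (μtil n)) (μtil n)‖
                  + ‖f s (π n s (μtil n)) (μtil n) - f s (π n s (μ n)) (μ n)‖ := by
              have h9 := norm_add_le
                (ftilde s (π n s (μtil n)) (μtil n) - f s (π n s (μtil n)) (μtil n))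
                (f s (π n s (μtil n)) (μtil n) - f s (π n s (μ n)) (μ n))
              rwa [sub_add_sub_cancel] at h9
            have ha := mul_le_mul_of_nonneg_left t4 (by positivity : (0:ℝ) ≤ 2 * sp * β)
            have hb := mul_le_mul_of_nonneg_left t3 hLf
            have hc := mul_le_mul_of_nonneg_left t3
              (by positivity : (0:ℝ) ≤ 2 * sp * β * Lσ)
            nlinarith [norm_nonneg (π n s (μtil n) - π n s (μ n)), hW10,
              norm_nonneg (σ s (π n s (μtil n)) (μtil n))]
          have hΔae : ∀ᵐ s ∂(μtil n), ‖hAE.mk _ s - f s (π n s (μ n)) (μ n)‖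
              ≤ 2 * sp * β * ‖σ s (π n s (μ n)) (μ n)‖
                + ((1 + Lπ) * (Lf + 2 * sp * β * Lσ)) * W1 (μtil n) (μ n) := by
            filter_upwards [hc'ae] with s hs
            rw [← hs]
            exact hΔptwise s
          -- integrability of Δ w.r.t. μtil n
          have hσint_til : Integrable (fun s => ‖σ s (π n s (μ n)) (μ n)‖) (μtil n) :=
            (hP.2.2 _ _ (hσLip n)).1.2 (hint n)
          have hΔint : Integrable (fun s => 2 * sp * β * ‖σ s (π n s (μ n)) (μ n)‖
              + ((1 + Lπ) * (Lf + 2 * sp * β * Lσ)) * W1 (μtil n) (μ n)) (μtil n) :=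
            (hσint_til.const_mul _).add (integrable_const _)
          -- the integral of Δ
          have hσval : (∫ s, ‖σ s (π n s (μ n)) (μ n)‖ ∂(μtil n))
              ≤ (∫ s, ‖σ s (π n s (μ n)) (μ n)‖ ∂(μ n)) + (Lσ * (1 + Lπ)) * BB n := by
            have h7 := (hP.2.2 _ _ (hσLip n)).2
            rw [Real.coe_toNNReal _ (by positivity)] at h7
            linarith
          have hDval : (∫ s, (2 * sp * β * ‖σ s (π n s (μ n)) (μ n)‖
                + ((1 + Lπ) * (Lf + 2 * sp * β * Lσ)) * W1 (μtil n) (μ n)) ∂(μtil n))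
              ≤ 2 * sp * β * (∫ s, ‖σ s (π n s (μ n)) (μ n)‖ ∂(μ n))
                + ((1 + Lπ) * (Lf + 2 * sp * β * Lσ)
                  + 2 * sp * β * (Lσ * (1 + Lπ))) * BB n := by
            rw [integral_add (hσint_til.const_mul _) (integrable_const _),
              integral_const, integral_const_mul]
            simp only [probReal_univ, one_smul]
            have h8 : ((1 + Lπ) * (Lf + 2 * sp * β * Lσ)) * W1 (μtil n) (μ n)
                ≤ ((1 + Lπ) * (Lf + 2 * sp * β * Lσ)) * BB n :=
              mul_le_mul_of_nonneg_left hW1le hK0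
            have h10 := mul_le_mul_of_nonneg_left hσval
              (by positivity : (0:ℝ) ≤ 2 * sp * β)
            nlinarith [h8, h10]
          -- apply the one-step lemma
          have hstep := step_bound ν (μtil n) (μ n) hc'meas (hcmeas n)
            (by positivity : (0:ℝ) ≤ Lf * (1 + Lπ)) (hcLip n) hΔ0 hΔae hΔint
            (hB0 n) hDval hP.2.2
          -- arithmetic: the new bound is at most BB (n+1)
          have harith : 2 * sp * β * (∫ s, ‖σ s (π n s (μ n)) (μ n)‖ ∂(μ n))
                + ((1 + Lπ) * (Lf + 2 * sp * β * Lσ)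
                  + 2 * sp * β * (Lσ * (1 + Lπ))) * BB n
                + (Lf * (1 + Lπ)) * BB n ≤ BB (n + 1) := by
            have hBsucc : BB (n + 1) = 2 * sp * β
                * (1 + 2 * (1 + Lπ) * (Lf + 2 * sp * β * Lσ)) ^ n
                * ((∑ i ∈ range n, ∫ s, ‖σ s (π i s (μ i)) (μ i)‖ ∂(μ i))
                  + ∫ s, ‖σ s (π n s (μ n)) (μ n)‖ ∂(μ n)) := by
              rw [hBdef]
              simp only [Nat.add_sub_cancel]
              rw [Finset.sum_range_succ]
            rcases Nat.eq_zero_or_pos n with hn | hn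
            · subst hn
              rw [hBsucc, hB00]
              simp only [Finset.range_zero, Finset.sum_empty, zero_add, pow_zero,
                mul_zero, add_zero, one_mul]
              nlinarith [hb0 0, hsp0, hβ.le]
            · obtain ⟨m', rfl⟩ : ∃ m', n = m' + 1 := ⟨n - 1, by omega⟩
              have hBn : BB (m' + 1) = 2 * sp * β
                  * (1 + 2 * (1 + Lπ) * (Lf + 2 * sp * β * Lσ)) ^ m'
                  * ∑ i ∈ range (m' + 1), ∫ s, ‖σ s (π i s (μ i)) (μ i)‖ ∂(μ i) := by
                rw [hBdef]
                simp only [Nat.add_sub_cancel]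
              have hXpos : 0 ≤ 2 * sp * β
                  * (1 + 2 * (1 + Lπ) * (Lf + 2 * sp * β * Lσ)) ^ m'
                  * ∑ i ∈ range (m' + 1), ∫ s, ‖σ s (π i s (μ i)) (μ i)‖ ∂(μ i) := by
                apply mul_nonneg (mul_nonneg (by positivity) (pow_nonneg hLbar0 _))
                exact Finset.sum_nonneg fun i _ => hb0 i
              have hpow : (1 + 2 * (1 + Lπ) * (Lf + 2 * sp * β * Lσ)) ^ (m' + 1)
                  = (1 + 2 * (1 + Lπ) * (Lf + 2 * sp * β * Lσ))
                    * (1 + 2 * (1 + Lπ) * (Lf + 2 * sp * β * Lσ)) ^ m' := by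
                rw [pow_succ]
                ring
              have hpow1 : (1:ℝ) ≤ (1 + 2 * (1 + Lπ) * (Lf + 2 * sp * β * Lσ)) ^ (m' + 1) :=
                one_le_pow₀ hLbar1
              have h9 : 0 ≤ ((1 + 2 * (1 + Lπ) * (Lf + 2 * sp * β * Lσ)) ^ (m' + 1) - 1)
                  * (2 * sp * β * ∫ s, ‖σ s (π (m' + 1) s (μ (m' + 1))) (μ (m' + 1))‖
                      ∂(μ (m' + 1))) :=
                mul_nonneg (by linarith)
                  (mul_nonneg (by positivity) (hb0 (m' + 1)))
              rw [hBsucc, hBn]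
              calc 2 * sp * β
                    * (∫ s, ‖σ s (π (m' + 1) s (μ (m' + 1))) (μ (m' + 1))‖ ∂(μ (m' + 1)))
                  + ((1 + Lπ) * (Lf + 2 * sp * β * Lσ)
                    + 2 * sp * β * (Lσ * (1 + Lπ)))
                    * (2 * sp * β * (1 + 2 * (1 + Lπ) * (Lf + 2 * sp * β * Lσ)) ^ m'
                      * ∑ i ∈ range (m' + 1), ∫ s, ‖σ s (π i s (μ i)) (μ i)‖ ∂(μ i))
                  + (Lf * (1 + Lπ))
                    * (2 * sp * β * (1 + 2 * (1 + Lπ) * (Lf + 2 * sp * β * Lσ)) ^ m'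
                      * ∑ i ∈ range (m' + 1), ∫ s, ‖σ s (π i s (μ i)) (μ i)‖ ∂(μ i))
                  = ((1 + 2 * (1 + Lπ) * (Lf + 2 * sp * β * Lσ)) - 1)
                    * (2 * sp * β * (1 + 2 * (1 + Lπ) * (Lf + 2 * sp * β * Lσ)) ^ m'
                      * ∑ i ∈ range (m' + 1), ∫ s, ‖σ s (π i s (μ i)) (μ i)‖ ∂(μ i))
                    + 2 * sp * β
                      * ∫ s, ‖σ s (π (m' + 1) s (μ (m' + 1))) (μ (m' + 1))‖
                        ∂(μ (m' + 1)) := by ring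
                _ ≤ (1 + 2 * (1 + Lπ) * (Lf + 2 * sp * β * Lσ))
                    * (2 * sp * β * (1 + 2 * (1 + Lπ) * (Lf + 2 * sp * β * Lσ)) ^ m'
                      * ∑ i ∈ range (m' + 1), ∫ s, ‖σ s (π i s (μ i)) (μ i)‖ ∂(μ i))
                    + (1 + 2 * (1 + Lπ) * (Lf + 2 * sp * β * Lσ)) ^ (m' + 1)
                      * (2 * sp * β
                        * ∫ s, ‖σ s (π (m' + 1) s (μ (m' + 1))) (μ (m' + 1))‖
                          ∂(μ (m' + 1))) := by
                    linarith [hXpos, h9]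
                _ = 2 * sp * β * (1 + 2 * (1 + Lπ) * (Lf + 2 * sp * β * Lσ)) ^ (m' + 1)
                    * ((∑ i ∈ range (m' + 1), ∫ s, ‖σ s (π i s (μ i)) (μ i)‖ ∂(μ i))
                      + ∫ s, ‖σ s (π (m' + 1) s (μ (m' + 1))) (μ (m' + 1))‖
                        ∂(μ (m' + 1))) := by
                    rw [hpow]
                    ring
          left
          refine ⟨hprob1, hprob2, ?_⟩
          intro L g hg
          have hres := hstep L g hg
          rw [hbind1, hμsucc]
          exact ⟨hres.1, le_trans hres.2
            (mul_le_mul_of_nonneg_left harith L.coe_nonneg)⟩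
        · -- degenerate case: the hallucinated kernel is not a.e. measurable
          right
          refine ⟨?_, hprob2⟩
          rw [hμtilstep n]
          show (μtil n).bind
            (fun s => ν.map (fun e => ftilde s (π n s (μtil n)) (μtil n) + e)) = 0
          exact bind_of_not_aemeasurable ν (μtil n) hAE
      · -- degenerate case propagates
        haveI hi2 : IsProbabilityMeasure (μ n) := hdeg.2
        right
        constructor
        · rw [hμtilstep n, hdeg.1]
          show (0 : Measure (EuclideanSpace ℝ (Fin p))).bind _ = 0
          exact Measure.bind_zero_left _
        · rw [hμsucc]
          exact isProb_bindK ν (μ n) (hcmeas n)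
  -- conclude
  intro h _hh
  have hRHS : 2 * sp * β
      * (1 + 2 * (1 + Lπ) * (Lf + 2 * sp * β * Lσ)) ^ (h - 1)
      * (∑ i ∈ range h, ∫ s, ‖σ s (π i s (μ i)) (μ i)‖ ∂(μ i)) = BB h := by
    rw [hBdef]
  rw [hRHS]
  rcases main h with hP | hdeg
  · apply Real.sSup_le _ (hB0 h)
    rintro x ⟨g, hg, rfl⟩
    have h9 := (hP.2.2 1 g hg).2
    simpa using h9
  · haveI := hdeg.2
    rw [hdeg.1]
    have hnb : ¬ BddAbove {x | ∃ g : EuclideanSpace ℝ (Fin p) → ℝ, LipschitzWith 1 g ∧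
        x = (∫ s, g s ∂(0 : Measure (EuclideanSpace ℝ (Fin p)))) - ∫ s, g s ∂(μ h)} := by
      rintro ⟨M, hM⟩
      have hmem : (M + 1 : ℝ) ∈ {x | ∃ g : EuclideanSpace ℝ (Fin p) → ℝ, LipschitzWith 1 g ∧
          x = (∫ s, g s ∂(0 : Measure (EuclideanSpace ℝ (Fin p)))) - ∫ s, g s ∂(μ h)} := by
        refine ⟨fun _ => -(M + 1), (LipschitzWith.const _).weaken zero_le_one, ?_⟩
        rw [integral_zero_measure, integral_const]
        simp [measure_univ]
      have h9 := hM hmem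
      linarith
    show sSup _ ≤ _
    rw [Real.sSup_of_not_bddAbove hnb]
    exact hB0 h
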